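/- Let (G,P) be a network with symmetry groupoid 𝔾. The space V(G,P) of groupoid-invariant virtual vector fields is linearly isomorphic to the product ⊓_{[a] ∈ 𝔾₀/𝔾₁} Ctrl(P I(a) → Pa)^{Aut(a)}, taken over a set of representatives of the isomorphism classes of objects, where Ctrl(P I(a) → Pa)^{Aut(a)} denotes the subspace of vectors fixed by the automorphism group Aut(a) acting via Ctrl. The isomorphism is given by restriction w ↦ (w_{a₁},…,w_{a_N}) for chosen representatives a₁,…,a_N. -/

import Mathlib

open Manifold

structure DGraph where
  V : Type
  E : Type
  src : E → V
  tgt : E → V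

/-- A map of directed multigraphs: functions on edges and vertices commuting with
source and target. -/
structure GraphMap (G G' : DGraph) where
  vmap : G.V → G'.V
  emap : G.E → G'.E
  src_eq : ∀ e, G'.src (emap e) = vmap (G.src e)
  tgt_eq : ∀ e, G'.tgt (emap e) = vmap (G.tgt e)

/-- `φ` is a graph fibration if for every vertex `a` of `G` and every edge `e'` of `G'`
with target `φ(a)`, there is a unique edge `e` of `G` with target `a` and `φ(e) = e'`. -/
def GraphMap.IsFibration {G G' : DGraph} (φ : GraphMap G G') : Prop :=
  ∀ (a : G.V) (e' : G'.E), G'.tgt e' = φ.vmap a →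
    ∃! e : G.E, G.tgt e = a ∧ φ.emap e = e'

/-- The set of edges of `G` with target `a`. -/
abbrev inEdges (G : DGraph) (a : G.V) : Type := {e : G.E // G.tgt e = a}

/-- The input tree `I(a)` of a vertex `a`: its vertices are `{a} ⊔ t⁻¹(a)` (the root `a`
is encoded as `none`, the leaf `γ ∈ t⁻¹(a)` as `some γ`), its edges are the pairs `(a, γ)`
for `γ ∈ t⁻¹(a)`, with source `γ` and target the root `a`. -/
def inputTree (G : DGraph) (a : G.V) : DGraph where
  V := Option (inEdges G a)
  E := inEdges G a
  src := fun γ => some γ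
  tgt := fun _ => none

/-- An isomorphism of graphs is a graph map bijective on vertices and on edges. -/
def GraphMap.IsIso {G G' : DGraph} (φ : GraphMap G G') : Prop :=
  Function.Bijective φ.vmap ∧ Function.Bijective φ.emap


/-- An isomorphism of input networks `(I(a), P ∘ ξ_a) → (I(a'), P' ∘ ξ_{a'})`.
Since any isomorphism of height-1 trees sends root to root and is determined by its
action on the leaves (equivalently, on the edges), it is given by a bijection `e` of the
sets of incoming edges; the network (phase-preserving) condition says that the root
phases agree (`hr`) and the phases of corresponding leaves agree (`hl`). -/
structure InputIso {ι : Type} (G : DGraph) (P : G.V → ι) (G' : DGraph) (P' : G'.V → ι)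
    (a : G.V) (a' : G'.V) where
  e : inEdges G a ≃ inEdges G' a'
  hr : P' a' = P a
  hl : ∀ γ : inEdges G a, P' (G'.src ((e γ) : inEdges G' a').1) = P (G.src γ.1)

/-- The identity isomorphism of an input network. -/
def InputIso.refl {ι : Type} (G : DGraph) (P : G.V → ι) (a : G.V) :
    InputIso G P G P a a :=
  ⟨Equiv.refl _, rfl, fun _ => rfl⟩

/-- Composition of isomorphisms of input networks. -/
def InputIso.comp {ι : Type} {G : DGraph} {P : G.V → ι} {G' : DGraph} {P' : G'.V → ι}
    {G'' : DGraph} {P'' : G''.V → ι} {a : G.V} {a' : G'.V} {a'' : G''.V}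
    (σ : InputIso G P G' P' a a') (σ' : InputIso G' P' G'' P'' a' a'') :
    InputIso G P G'' P'' a a'' :=
  ⟨σ.e.trans σ'.e, σ'.hr.trans σ.hr, fun γ => (σ'.hl (σ.e γ)).trans (σ.hl γ)⟩

/-- The inverse of an isomorphism of input networks. -/
def InputIso.inv {ι : Type} {G : DGraph} {P : G.V → ι} {G' : DGraph} {P' : G'.V → ι}
    {a : G.V} {a' : G'.V} (σ : InputIso G P G' P' a a') : InputIso G' P' G P a' a :=
  ⟨σ.e.symm, σ.hr.symm, fun γ' => by
    have h := σ.hl (σ.e.symm γ')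
    rw [Equiv.apply_symm_apply] at h
    exact h.symm⟩

variable {ι : Type} {EE : ι → Type} [∀ i, NormedAddCommGroup (EE i)]
  [∀ i, NormedSpace ℝ (EE i)] {HH : ι → Type} [∀ i, TopologicalSpace (HH i)]
  (II : ∀ i, ModelWithCorners ℝ (EE i) (HH i))
  (MM : ι → Type) [∀ i, TopologicalSpace (MM i)] [∀ i, ChartedSpace (HH i) (MM i)]
  [∀ i, IsManifold (II i) (⊤ : ℕ∞) (MM i)]

/-- The total phase space `P I(a) = P(a) × ⊓_{γ ∈ t⁻¹(a)} P(s(γ))` of the input network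
of the vertex `a` of the network `(G, P)` (phase spaces drawn from the family of
manifolds `MM` via the index function `P : G.V → ι`). -/
abbrev PIn (G : DGraph) (P : G.V → ι) (a : G.V) : Type :=
  MM (P a) × ((γ : inEdges G a) → MM (P (G.src γ.1)))

/-- The underlying (not necessarily smooth) sections of the control space
`Ctrl(P I(a) → P a)`: maps `F` from `P I(a)` to the tangent bundle of `P a = P(a)` with
`F q ∈ T_{p(q)} P(a)`, where `p : P I(a) → P(a)` is the projection onto the root factor. -/
abbrev Raw (G : DGraph) (P : G.V → ι) (a : G.V) : Type :=
  (q : PIn MM G P a) → TangentSpace (II (P a)) q.1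

/-- The model with corners for the manifold `P I(a)`. -/
noncomputable def PInModel (G : DGraph) [Fintype G.E] [DecidableEq G.V]
    (P : G.V → ι) (a : G.V) :
    ModelWithCorners ℝ (EE (P a) × ((γ : inEdges G a) → EE (P (G.src γ.1))))
      (ModelProd (HH (P a)) (ModelPi fun γ : inEdges G a => HH (P (G.src γ.1)))) :=
  (II (P a)).prod (ModelWithCorners.pi fun γ : inEdges G a => II (P (G.src γ.1)))

/-- Smoothness of an element of `Ctrl(P I(a) → P a)`, as a map into the tangent bundle.
`Ctrl(P I(a) → P a)` is the vector space of smooth maps `F : P I(a) → T P(a)` with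
`F q ∈ T_{p(q)} P(a)`, i.e. the subspace of smooth elements of `Raw`. -/
def IsSmoothCtrl (G : DGraph) [Fintype G.E] [DecidableEq G.V] (P : G.V → ι) (a : G.V)
    (F : Raw II MM G P a) : Prop :=
  ContMDiff (PInModel II G P a) (II (P a)).tangent (⊤ : ℕ∞)
    (fun q => Bundle.TotalSpace.mk q.1 (F q) :
      PIn MM G P a → TangentBundle (II (P a)) (MM (P a)))

/-- The map `P φ : P I(a') → P I(a)` of total phase spaces of input networks induced
(contravariantly) by an isomorphism `φ` of input networks. -/
def phaseIn {G : DGraph} {P : G.V → ι} {G' : DGraph} {P' : G'.V → ι} {a : G.V}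
    {a' : G'.V} (σ : InputIso G P G' P' a a') : PIn MM G' P' a' → PIn MM G P a :=
  fun q => (cast (congrArg MM σ.hr) q.1,
    fun γ => cast (congrArg MM (σ.hl γ)) (q.2 (σ.e γ)))

/-- Transport of tangent vectors along an equality of phase space indices; this is the
differential of the induced diffeomorphism of phase spaces (a `cast`). -/
def tcast {i j : ι} (h : i = j) {x : MM i} {y : MM j} (v : TangentSpace (II i) x) :
    TangentSpace (II j) y :=
  cast (congrArg EE h) v

/-- The map `Ctrl(φ) : Ctrl(P I(a) → P a) → Ctrl(P I(a') → P a')`,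
`Ctrl(φ)(F) = D(P(φ|ₐ))⁻¹ ∘ F ∘ P φ`, induced by an isomorphism `φ` of input networks:
here `P(φ|ₐ) : P(a') → P(a)` is the diffeomorphism (a `cast`) induced by the restriction
of `φ` to the root, and its differential is `tcast`. -/
def ctrlMap {G : DGraph} {P : G.V → ι} {G' : DGraph} {P' : G'.V → ι} {a : G.V}
    {a' : G'.V} (σ : InputIso G P G' P' a a') :
    Raw II MM G P a → Raw II MM G' P' a' :=
  fun F q' => tcast II MM σ.hr.symm (F (phaseIn MM σ q'))

/-- A virtual vector field on the network `(G, P)`, i.e. a section of the control bundle,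
is smooth if each of its components is a smooth control system. -/
def IsSmoothSec (G : DGraph) [Fintype G.E] [DecidableEq G.V] (P : G.V → ι)
    (w : ∀ a, Raw II MM G P a) : Prop :=
  ∀ a, IsSmoothCtrl II MM G P a (w a)

/-- A virtual vector field `w` on `(G, P)` is invariant under the symmetry groupoid if
`Ctrl(σ) (w a) = w b` for every isomorphism `σ : (I(a), P∘ξ_a) → (I(b), P∘ξ_b)` of input
networks.  Together with smoothness this cuts out `V(G,P) ⊆ S(G,P)`. -/
def IsInvariantSec (G : DGraph) (P : G.V → ι) (w : ∀ a, Raw II MM G P a) : Prop :=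
  ∀ (a b : G.V) (σ : InputIso G P G P a b), ctrlMap II MM σ (w a) = w b


section PiAPI
variable {κ : Type} [Fintype κ] {E : κ → Type} [∀ k, NormedAddCommGroup (E k)]
  [∀ k, NormedSpace ℝ (E k)] {H : κ → Type} [∀ k, TopologicalSpace (H k)]
  (I : ∀ k, ModelWithCorners ℝ (E k) (H k))
  {M : κ → Type} [∀ k, TopologicalSpace (M k)] [∀ k, ChartedSpace (H k) (M k)]

theorem extChartAt_pi' (p : ∀ k, M k) :
    extChartAt (ModelWithCorners.pi I) p = PartialEquiv.pi fun k => extChartAt (I k) (p k) := by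
  simp only [extChartAt, OpenPartialHomeomorph.extend, piChartedSpace_chartAt]
  exact PartialEquiv.pi_trans _ _

theorem contMDiff_eval' (k₀ : κ) :
    ContMDiff (ModelWithCorners.pi I) (I k₀) (⊤ : ℕ∞) (fun p : ∀ k, M k => p k₀) := by
  intro p
  rw [contMDiffAt_iff]
  refine ⟨(continuous_apply k₀).continuousAt, ?_⟩
  have hmem : (extChartAt (ModelWithCorners.pi I) p).target ∈
      nhdsWithin (extChartAt (ModelWithCorners.pi I) p p)
        (Set.range (ModelWithCorners.pi I)) := extChartAt_target_mem_nhdsWithin _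
  have key : ∀ x ∈ (extChartAt (ModelWithCorners.pi I) p).target,
      (extChartAt (I k₀) (p k₀) ∘ (fun q : ∀ k, M k => q k₀) ∘
        (extChartAt (ModelWithCorners.pi I) p).symm) x = x k₀ := by
    intro x hx
    rw [extChartAt_pi'] at hx
    have hx₀ : x k₀ ∈ (extChartAt (I k₀) (p k₀)).target := by
      rw [PartialEquiv.pi_target] at hx
      exact hx k₀ trivial
    have : ((extChartAt (ModelWithCorners.pi I) p).symm x) k₀
        = (extChartAt (I k₀) (p k₀)).symm (x k₀) := by
      rw [extChartAt_pi']
      rfl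
    simp only [Function.comp_apply, this]
    exact (extChartAt (I k₀) (p k₀)).right_inv hx₀
  refine ContDiffWithinAt.congr_of_eventuallyEq
    ((ContinuousLinearMap.proj k₀ : (∀ k, E k) →L[ℝ] E k₀).contDiff.contDiffWithinAt) ?_ ?_
  · filter_upwards [hmem] with x hx
    exact key x hx
  · exact key _ ((extChartAt (ModelWithCorners.pi I) p).map_source (mem_extChartAt_source _))

variable {EN HN N : Type} [NormedAddCommGroup EN] [NormedSpace ℝ EN] [TopologicalSpace HN]
  {J : ModelWithCorners ℝ EN HN} [TopologicalSpace N] [ChartedSpace HN N]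

theorem contMDiff_pi_mk' {Φ : N → ∀ k, M k}
    (h : ∀ k, ContMDiff J (I k) (⊤ : ℕ∞) (fun x => Φ x k)) :
    ContMDiff J (ModelWithCorners.pi I) (⊤ : ℕ∞) Φ := by
  intro x₀
  rw [contMDiffAt_iff]
  refine ⟨continuousAt_pi.mpr fun k => (h k x₀).continuousAt, ?_⟩
  rw [extChartAt_pi']
  refine contDiffWithinAt_pi.mpr fun k => ?_
  exact (contMDiffAt_iff.mp (h k x₀)).2

end PiAPI

/-- Casting between diffeomorphic (equal) phase spaces is smooth. -/
theorem contMDiff_cast' {i j : ι} (h : i = j) :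
    ContMDiff (II i) (II j) (⊤ : ℕ∞) (fun x : MM i => cast (congrArg MM h) x) := by
  subst h
  exact contMDiff_id

/-- The induced cast on tangent bundles. -/
def bcast {i j : ι} (h : i = j) :
    TangentBundle (II i) (MM i) → TangentBundle (II j) (MM j) :=
  fun x => Bundle.TotalSpace.mk (cast (congrArg MM h) x.1) (tcast II MM h x.2)

theorem contMDiff_bcast {i j : ι} (h : i = j) :
    ContMDiff (II i).tangent (II j).tangent (⊤ : ℕ∞) (bcast II MM h) := by
  subst h
  exact contMDiff_id

theorem contMDiff_phaseIn {G : DGraph} [Fintype G.E] [DecidableEq G.V] {P : G.V → ι}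
    {a b : G.V} (σ : InputIso G P G P a b) :
    ContMDiff (PInModel II G P b) (PInModel II G P a) (⊤ : ℕ∞) (phaseIn MM σ) := by
  refine ContMDiff.prodMk ?_ ?_
  · exact (contMDiff_cast' II MM σ.hr).comp contMDiff_fst
  · refine contMDiff_pi_mk' _ fun γ => ?_
    exact (contMDiff_cast' II MM (σ.hl γ)).comp
      ((contMDiff_eval' _ (σ.e γ)).comp contMDiff_snd)

theorem isSmoothCtrl_ctrlMap {G : DGraph} [Fintype G.E] [DecidableEq G.V] {P : G.V → ι}
    {a b : G.V} (σ : InputIso G P G P a b) {F : Raw II MM G P a}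
    (hF : IsSmoothCtrl II MM G P a F) : IsSmoothCtrl II MM G P b (ctrlMap II MM σ F) := by
  have key : (fun q : PIn MM G P b =>
        (Bundle.TotalSpace.mk q.1 (ctrlMap II MM σ F q) :
          TangentBundle (II (P b)) (MM (P b))))
      = (bcast II MM σ.hr.symm) ∘
        (fun q : PIn MM G P a =>
          (Bundle.TotalSpace.mk q.1 (F q) : TangentBundle (II (P a)) (MM (P a)))) ∘
        (phaseIn MM σ) := by
    funext q
    have hb : cast (congrArg MM σ.hr.symm) (cast (congrArg MM σ.hr) q.1) = q.1 :=
      eq_of_heq ((cast_heq _ _).trans (cast_heq _ _))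
    show Bundle.TotalSpace.mk q.1 (tcast II MM σ.hr.symm (F (phaseIn MM σ q)))
      = Bundle.TotalSpace.mk (cast (congrArg MM σ.hr.symm) (cast (congrArg MM σ.hr) q.1))
        (tcast II MM σ.hr.symm (F (phaseIn MM σ q)))
    exact congrArg (fun x => Bundle.TotalSpace.mk x
      (tcast II MM σ.hr.symm (F (phaseIn MM σ q)))) hb.symm
  rw [IsSmoothCtrl, key]
  exact (contMDiff_bcast II MM σ.hr.symm).comp (hF.comp (contMDiff_phaseIn II MM σ))

theorem phaseIn_comp {G : DGraph} {P : G.V → ι} {a b c : G.V}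
    (σ : InputIso G P G P a b) (τ : InputIso G P G P b c) (q : PIn MM G P c) :
    phaseIn MM σ (phaseIn MM τ q) = phaseIn MM (σ.comp τ) q := by
  refine Prod.ext ?_ ?_
  · exact eq_of_heq (((cast_heq _ _).trans (cast_heq _ _)).trans (cast_heq _ _).symm)
  · funext γ
    exact eq_of_heq (((cast_heq _ _).trans (cast_heq _ _)).trans (cast_heq _ _).symm)

theorem ctrlMap_comp {G : DGraph} {P : G.V → ι} {a b c : G.V}
    (σ : InputIso G P G P a b) (τ : InputIso G P G P b c) (F : Raw II MM G P a) :
    ctrlMap II MM τ (ctrlMap II MM σ F) = ctrlMap II MM (σ.comp τ) F := by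
  funext q
  show tcast II MM τ.hr.symm (tcast II MM σ.hr.symm (F (phaseIn MM σ (phaseIn MM τ q))))
    = tcast II MM (σ.comp τ).hr.symm (F (phaseIn MM (σ.comp τ) q))
  rw [phaseIn_comp]
  exact eq_of_heq (((cast_heq _ _).trans (cast_heq _ _)).trans (cast_heq _ _).symm)

theorem phaseIn_inv_cancel {G : DGraph} {P : G.V → ι} {a b : G.V}
    (σ : InputIso G P G P a b) (q : PIn MM G P a) :
    phaseIn MM σ (phaseIn MM σ.inv q) = q := by
  refine Prod.ext ?_ ?_
  · exact eq_of_heq ((cast_heq _ _).trans (cast_heq _ _))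
  · funext γ
    have h : σ.e.symm (σ.e γ) = γ := σ.e.symm_apply_apply γ
    have h2 : HEq (q.2 (σ.e.symm (σ.e γ))) (q.2 γ) := by rw [h]
    exact eq_of_heq (((cast_heq _ _).trans (cast_heq _ _)).trans h2)

theorem ctrlMap_inv_cancel {G : DGraph} {P : G.V → ι} {a b : G.V}
    (σ : InputIso G P G P a b) (F : Raw II MM G P a) :
    ctrlMap II MM σ.inv (ctrlMap II MM σ F) = F := by
  funext q
  show tcast II MM σ.inv.hr.symm
      (tcast II MM σ.hr.symm (F (phaseIn MM σ (phaseIn MM σ.inv q)))) = F q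
  rw [phaseIn_inv_cancel]
  exact eq_of_heq ((cast_heq _ _).trans (cast_heq _ _))

/-- **`V(G,P)` is the product of the fixed-vector subspaces over isomorphism classes.**
Let `(G,P)` be a network and let `ra : A → G.V` choose representatives of the isomorphism
classes of objects of the symmetry groupoid (every vertex is isomorphic to some
representative, and distinct representatives are non-isomorphic).  Then the restriction
map `w ↦ (w_{ra i})_i` is a linear isomorphism from the space `V(G,P)` of smooth
groupoid-invariant virtual vector fields onto the product over `i` of the subspaces of
`Ctrl(P I(ra i) → P (ra i))` fixed by the `Ctrl`-action of `Aut(ra i)`. -/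
theorem invariant_sections_product_of_fixed_subspaces
    {G : DGraph} [Fintype G.E] [DecidableEq G.V] {P : G.V → ι}
    (A : Type) (ra : A → G.V)
    (hcomplete : ∀ a : G.V, ∃ i : A, Nonempty (InputIso G P G P a (ra i)))
    (hirr : ∀ i j : A, Nonempty (InputIso G P G P (ra i) (ra j)) → i = j) :
    Function.Bijective
      (fun w : {w : ∀ a, Raw II MM G P a //
          IsSmoothSec II MM G P w ∧ IsInvariantSec II MM G P w} =>
        (⟨fun i => w.1 (ra i), fun i =>
            ⟨w.2.1 (ra i), fun σ => w.2.2 (ra i) (ra i) σ⟩⟩ :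
          {v : ∀ i : A, Raw II MM G P (ra i) //
            ∀ i, IsSmoothCtrl II MM G P (ra i) (v i) ∧
              ∀ σ : InputIso G P G P (ra i) (ra i), ctrlMap II MM σ (v i) = v i})) ∧
    (∀ w₁ w₂ : ∀ a, Raw II MM G P a,
      (fun i => (w₁ + w₂) (ra i)) = (fun i => w₁ (ra i)) + (fun i => w₂ (ra i))) ∧
    (∀ (c : ℝ) (w : ∀ a, Raw II MM G P a),
      (fun i => (c • w) (ra i)) = c • (fun i => w (ra i))) := by
  refine ⟨⟨?_, ?_⟩, fun _ _ => rfl, fun _ _ => rfl⟩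
  · -- injectivity
    rintro ⟨w₁, hw₁⟩ ⟨w₂, hw₂⟩ h
    have h' : (fun i => w₁ (ra i)) = fun i => w₂ (ra i) := congrArg Subtype.val h
    refine Subtype.ext (funext fun a => ?_)
    obtain ⟨i, ⟨σ⟩⟩ := hcomplete a
    show w₁ a = w₂ a
    have e1 : ctrlMap II MM σ.inv (w₁ (ra i)) = w₁ a := hw₁.2 (ra i) a σ.inv
    have e2 : ctrlMap II MM σ.inv (w₂ (ra i)) = w₂ a := hw₂.2 (ra i) a σ.inv
    rw [← e1, ← e2, congrFun h' i]
  · -- surjectivity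
    rintro ⟨v, hv⟩
    have sel : ∀ a : G.V, Σ' i : A, InputIso G P G P a (ra i) := fun a =>
      ⟨(hcomplete a).choose, Classical.choice (hcomplete a).choose_spec⟩
    set w : ∀ a, Raw II MM G P a :=
      fun a => ctrlMap II MM (sel a).2.inv (v (sel a).1) with hwdef
    have hsm : IsSmoothSec II MM G P w := fun a =>
      isSmoothCtrl_ctrlMap II MM (sel a).2.inv ((hv (sel a).1).1)
    have hinv : IsInvariantSec II MM G P w := by
      intro a b τ
      show ctrlMap II MM τ (ctrlMap II MM (sel a).2.inv (v (sel a).1))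
        = ctrlMap II MM (sel b).2.inv (v (sel b).1)
      rcases hA : sel a with ⟨ia, σa⟩
      rcases hB : sel b with ⟨ib, σb⟩
      simp only [hA, hB]
      have hij : ia = ib := hirr ia ib ⟨(σa.inv.comp τ).comp σb⟩
      subst hij
      have hauto : ctrlMap II MM ((σa.inv.comp τ).comp σb) (v ia) = v ia :=
        (hv ia).2 _
      calc ctrlMap II MM τ (ctrlMap II MM σa.inv (v ia))
          = ctrlMap II MM (σa.inv.comp τ) (v ia) := ctrlMap_comp II MM _ _ _
        _ = ctrlMap II MM σb.inv
              (ctrlMap II MM σb (ctrlMap II MM (σa.inv.comp τ) (v ia))) :=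
            (ctrlMap_inv_cancel II MM σb _).symm
        _ = ctrlMap II MM σb.inv
              (ctrlMap II MM ((σa.inv.comp τ).comp σb) (v ia)) :=
            congrArg (ctrlMap II MM σb.inv) (ctrlMap_comp II MM _ σb _)
        _ = ctrlMap II MM σb.inv (v ia) := by rw [hauto]
    refine ⟨⟨w, hsm, hinv⟩, Subtype.ext (funext fun i => ?_)⟩
    show ctrlMap II MM (sel (ra i)).2.inv (v (sel (ra i)).1) = v i
    rcases hR : sel (ra i) with ⟨j, σ⟩
    simp only [hR]
    have hji : i = j := hirr i j ⟨σ⟩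
    subst hji
    exact (hv i).2 σ.inv
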